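/- For each dimension d ≥ 1 there exists a constant κ > 0 such that for every N ≥ 1 there is a twice continuously differentiable function φ : ℝ^d → ℝ with 1_{B_N(0)} ≤ φ ≤ 1_{B_{N+1}(0)} and |Δφ(x)| ≤ κ·√(φ(x)) for all x ∈ ℝ^d. -/

import Mathlib

open Metric Set

noncomputable def laplacian (d : ℕ) (φ : EuclideanSpace ℝ (Fin d) → ℝ)
    (x : EuclideanSpace ℝ (Fin d)) : ℝ :=
  ∑ i : Fin d,
    iteratedFDeriv ℝ 2 φ x ![EuclideanSpace.single i 1, EuclideanSpace.single i 1]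

noncomputable section StmtAux


/-- positive part -/
def mp (s : ℝ) : ℝ := max s 0

lemma mp_nonneg (s : ℝ) : 0 ≤ mp s := le_max_right _ _
lemma mp_of_nonneg {s : ℝ} (h : 0 ≤ s) : mp s = s := max_eq_left h
lemma mp_of_nonpos {s : ℝ} (h : s ≤ 0) : mp s = 0 := max_eq_right h
lemma continuous_mp : Continuous mp := continuous_id.max continuous_const

lemma hasDerivAt_mp_pow (n : ℕ) (x : ℝ) :
    HasDerivAt (fun s => mp s ^ (n + 2)) (((n:ℝ) + 2) * mp x ^ (n + 1)) x := by
  rcases lt_trichotomy x 0 with h | h | h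
  · have hev : (fun s : ℝ => mp s ^ (n + 2)) =ᶠ[nhds x] fun _ => (0:ℝ) := by
      filter_upwards [IsOpen.mem_nhds isOpen_Iio h] with s hs
      simp [mp_of_nonpos (le_of_lt hs), pow_succ]
    rw [mp_of_nonpos h.le]
    simpa using (hasDerivAt_const x (0:ℝ)).congr_of_eventuallyEq hev
  · subst h
    have hmp0 : mp (0:ℝ) = 0 := mp_of_nonpos le_rfl
    rw [hasDerivAt_iff_isLittleO, Asymptotics.isLittleO_iff]
    intro ε hε
    have hmem : Metric.ball (0:ℝ) (min ε 1) ∈ nhds (0:ℝ) :=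
      Metric.ball_mem_nhds _ (lt_min hε one_pos)
    filter_upwards [hmem] with s hs
    rw [Real.ball_eq_Ioo] at hs
    have hs1 : |s| < min ε 1 := abs_lt.2 ⟨by linarith [hs.1], by linarith [hs.2]⟩
    have h1 : |mp s| ≤ |s| := by
      rcases le_or_gt s 0 with h' | h'
      · rw [mp_of_nonpos h']; simp
      · rw [mp_of_nonneg h'.le]
    have h2 : |mp s ^ (n+2)| ≤ |s| ^ (n+2) := by
      rw [abs_pow]
      exact pow_le_pow_left₀ (abs_nonneg _) h1 _
    have h3 : |s| ^ (n+2) ≤ |s| ^ 2 := by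
      apply pow_le_pow_of_le_one (abs_nonneg _) (le_of_lt (lt_of_lt_of_le hs1 (min_le_right _ _)))
      omega
    have h4 : |s| ^ 2 ≤ ε * |s| := by
      rw [sq]
      exact mul_le_mul_of_nonneg_right (le_of_lt (lt_of_lt_of_le hs1 (min_le_left _ _))) (abs_nonneg _)
    have hk : |mp s ^ (n+2)| ≤ ε * |s| := le_trans h2 (le_trans h3 h4)
    simp only [hmp0, sub_zero, smul_eq_mul, zero_pow (Nat.succ_ne_zero (n+1)),
      zero_pow (Nat.succ_ne_zero n), mul_zero, sub_zero, Real.norm_eq_abs]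
    simpa using hk
  · have hev : (fun s : ℝ => mp s ^ (n + 2)) =ᶠ[nhds x] fun s => s ^ (n + 2) := by
      filter_upwards [IsOpen.mem_nhds isOpen_Ioi h] with s hs
      simp [mp_of_nonneg (le_of_lt hs)]
    have hp : HasDerivAt (fun s : ℝ => s ^ (n+2)) (((n:ℝ) + 2) * x ^ (n+1)) x := by
      have := hasDerivAt_pow (n+2) x
      exact this.congr_deriv (by simp)
    rw [mp_of_nonneg h.le]
    exact hp.congr_of_eventuallyEq hev

lemma hasDerivAt_mp_pow_one_sub (n : ℕ) (x : ℝ) :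
    HasDerivAt (fun s => mp (1 - s) ^ (n + 2)) (-(((n:ℝ) + 2) * mp (1 - x) ^ (n + 1))) x := by
  have hone : HasDerivAt (fun s : ℝ => 1 - s) (-1) x := by
    exact (hasDerivAt_id x).const_sub 1
  have := (hasDerivAt_mp_pow n (1 - x)).comp x hone
  exact this.congr_deriv (by ring)

lemma hasDerivAt_mp_pow_neg (n : ℕ) (x : ℝ) :
    HasDerivAt (fun s => mp (-s) ^ (n + 2)) (-(((n:ℝ) + 2) * mp (-x) ^ (n + 1))) x := by
  have hneg : HasDerivAt (fun s : ℝ => -s) (-1) x := by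
    exact (hasDerivAt_id x).neg
  have := (hasDerivAt_mp_pow n (-x)).comp x hneg
  exact this.congr_deriv (by ring)

/-- the bump profile -/
def gb (s : ℝ) : ℝ :=
  mp (1 - s) ^ 4 * (1 + 4*s + 10*s^2)
    - 20 * mp (-s) ^ 3 - 45 * mp (-s) ^ 4 - 36 * mp (-s) ^ 5 - 10 * mp (-s) ^ 6

def gb1 (s : ℝ) : ℝ :=
  -4 * mp (1 - s) ^ 3 * (1 + 4*s + 10*s^2) + mp (1 - s) ^ 4 * (4 + 20*s)
    + 60 * mp (-s) ^ 2 + 180 * mp (-s) ^ 3 + 180 * mp (-s) ^ 4 + 60 * mp (-s) ^ 5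

def gb2 (s : ℝ) : ℝ :=
  12 * mp (1 - s) ^ 2 * (1 + 4*s + 10*s^2) - 8 * mp (1 - s) ^ 3 * (4 + 20*s)
    + 20 * mp (1 - s) ^ 4 - 120 * mp (-s) - 540 * mp (-s) ^ 2
    - 720 * mp (-s) ^ 3 - 300 * mp (-s) ^ 4

lemma hasDerivAt_poly (x : ℝ) : HasDerivAt (fun s : ℝ => 1 + 4*s + 10*s^2) (4 + 20*x) x := by
  have h0 : HasDerivAt (fun s : ℝ => s^2) (2*x) x := by
    simpa using hasDerivAt_pow 2 x
  have h1 : HasDerivAt (fun s : ℝ => 10*s^2) (10*(2*x)) x := h0.const_mul 10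
  have h2 : HasDerivAt (fun s : ℝ => 4*s) 4 x := by
    simpa using (hasDerivAt_id x).const_mul 4
  have := ((hasDerivAt_const x (1:ℝ)).add h2).add h1
  exact this.congr_deriv (by ring)

lemma hasDerivAt_gb (x : ℝ) : HasDerivAt gb (gb1 x) x := by
  have h4 := hasDerivAt_mp_pow_one_sub 2 x
  have hp3 := hasDerivAt_mp_pow_neg 1 x
  have hp4 := hasDerivAt_mp_pow_neg 2 x
  have hp5 := hasDerivAt_mp_pow_neg 3 x
  have hp6 := hasDerivAt_mp_pow_neg 4 x
  have hmain := h4.mul (hasDerivAt_poly x)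
  have := ((((hmain.sub (hp3.const_mul 20)).sub (hp4.const_mul 45)).sub
      (hp5.const_mul 36)).sub (hp6.const_mul 10))
  exact this.congr_deriv (by unfold gb1; push_cast; ring)

lemma hasDerivAt_gb1 (x : ℝ) : HasDerivAt gb1 (gb2 x) x := by
  have h3 := hasDerivAt_mp_pow_one_sub 1 x
  have h4 := hasDerivAt_mp_pow_one_sub 2 x
  have hp2 := hasDerivAt_mp_pow_neg 0 x
  have hp3 := hasDerivAt_mp_pow_neg 1 x
  have hp4 := hasDerivAt_mp_pow_neg 2 x
  have hp5 := hasDerivAt_mp_pow_neg 3 x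
  have hpoly2 : HasDerivAt (fun s : ℝ => 4 + 20*s) 20 x := by
    exact ((hasDerivAt_id x).const_mul 20).const_add 4 |>.congr_deriv (by ring)
  have hA := (h3.mul (hasDerivAt_poly x)).const_mul (-4 : ℝ)
  have hB := h4.mul hpoly2
  have := ((((hA.add hB).add (hp2.const_mul 60)).add (hp3.const_mul 180)).add
      (hp4.const_mul 180)).add (hp5.const_mul 60)
  have heq : gb1 = fun s => -4 * (mp (1 - s) ^ 3 * (1 + 4*s + 10*s^2)) + mp (1 - s) ^ 4 * (4 + 20*s)
    + 60 * mp (-s) ^ 2 + 180 * mp (-s) ^ 3 + 180 * mp (-s) ^ 4 + 60 * mp (-s) ^ 5 := by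
    funext s; unfold gb1; ring
  rw [heq]
  exact this.congr_deriv (by unfold gb2; push_cast; ring)

lemma continuous_gb2 : Continuous gb2 := by
  unfold gb2
  have h1 : Continuous fun s : ℝ => mp (1 - s) :=
    continuous_mp.comp (continuous_const.sub continuous_id)
  have h2 : Continuous fun s : ℝ => mp (-s) := continuous_mp.comp continuous_neg
  fun_prop

lemma contDiff_gb : ContDiff ℝ 2 gb := by
  have hd1 : deriv gb = gb1 := funext fun x => (hasDerivAt_gb x).deriv
  have hd2 : deriv gb1 = gb2 := funext fun x => (hasDerivAt_gb1 x).deriv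
  have h2 : (2 : WithTop ℕ∞) = (1:ℕ) + 1 := by norm_cast
  rw [h2, contDiff_succ_iff_deriv]
  refine ⟨fun x => (hasDerivAt_gb x).differentiableAt, by simp, ?_⟩
  rw [hd1, show ((1:ℕ) : WithTop ℕ∞) = (0:ℕ) + 1 from rfl, contDiff_succ_iff_deriv]
  refine ⟨fun x => (hasDerivAt_gb1 x).differentiableAt, by simp, ?_⟩
  rw [hd2]
  exact contDiff_zero.2 continuous_gb2

lemma gb_of_nonpos {s : ℝ} (h : s ≤ 0) : gb s = 1 := by
  unfold gb
  rw [mp_of_nonneg (by linarith), mp_of_nonneg (by linarith)]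
  ring

lemma gb_of_ge_one {s : ℝ} (h : 1 ≤ s) : gb s = 0 := by
  unfold gb
  rw [mp_of_nonpos (by linarith), mp_of_nonpos (by linarith)]
  ring

lemma gb_of_mem {s : ℝ} (h0 : 0 ≤ s) (h1 : s ≤ 1) :
    gb s = (1 - s)^4 * (1 + 4*s + 10*s^2) := by
  unfold gb
  rw [mp_of_nonneg (by linarith), mp_of_nonpos (by linarith)]
  ring

lemma gb1_of_nonpos {s : ℝ} (h : s ≤ 0) : gb1 s = 0 := by
  unfold gb1
  rw [mp_of_nonneg (by linarith), mp_of_nonneg (by linarith)]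
  ring

lemma gb1_of_ge_one {s : ℝ} (h : 1 ≤ s) : gb1 s = 0 := by
  unfold gb1
  rw [mp_of_nonpos (by linarith), mp_of_nonpos (by linarith)]
  ring

lemma gb1_of_mem {s : ℝ} (h0 : 0 ≤ s) (h1 : s ≤ 1) : gb1 s = -60 * s^2 * (1-s)^3 := by
  unfold gb1
  rw [mp_of_nonneg (by linarith), mp_of_nonpos (by linarith)]
  ring

lemma gb2_of_nonpos {s : ℝ} (h : s ≤ 0) : gb2 s = 0 := by
  unfold gb2
  rw [mp_of_nonneg (by linarith), mp_of_nonneg (by linarith)]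
  ring

lemma gb2_of_ge_one {s : ℝ} (h : 1 ≤ s) : gb2 s = 0 := by
  unfold gb2
  rw [mp_of_nonpos (by linarith), mp_of_nonpos (by linarith)]
  ring

lemma gb2_of_mem {s : ℝ} (h0 : 0 ≤ s) (h1 : s ≤ 1) : gb2 s = 60 * s * (1-s)^2 * (5*s - 2) := by
  unfold gb2
  rw [mp_of_nonneg (by linarith), mp_of_nonpos (by linarith)]
  ring

lemma gb_nonneg (s : ℝ) : 0 ≤ gb s := by
  rcases le_or_gt s 0 with h | h
  · rw [gb_of_nonpos h]; norm_num
  rcases le_or_gt 1 s with h1 | h1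
  · rw [gb_of_ge_one h1]
  · rw [gb_of_mem h.le h1.le]
    have : (0:ℝ) ≤ (1-s)^4 := by positivity
    nlinarith [sq_nonneg s]

lemma gb_le_one (s : ℝ) : gb s ≤ 1 := by
  rcases le_or_gt s 0 with h | h
  · rw [gb_of_nonpos h]
  rcases le_or_gt 1 s with h1 | h1
  · rw [gb_of_ge_one h1]; norm_num
  · rw [gb_of_mem h.le h1.le]
    nlinarith [sq_nonneg s, sq_nonneg (1-s), sq_nonneg (s*(1-s)), pow_nonneg h.le 3,
      mul_pos h (sub_pos.2 h1)]

lemma sq_le_sqrt_gb {s : ℝ} (h0 : 0 ≤ s) (h1 : s ≤ 1) : (1-s)^2 ≤ Real.sqrt (gb s) := by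
  rw [show (1-s)^2 = Real.sqrt (((1-s)^2)^2) from (Real.sqrt_sq (by positivity)).symm]
  apply Real.sqrt_le_sqrt
  rw [gb_of_mem h0 h1]
  nlinarith [pow_nonneg (sub_nonneg.2 h1) 4, sq_nonneg s]

lemma abs_gb1_le (s : ℝ) : |gb1 s| ≤ 180 * Real.sqrt (gb s) := by
  rcases le_or_gt s 0 with h | h
  · rw [gb1_of_nonpos h, gb_of_nonpos h]
    simp [Real.sqrt_one]
  rcases le_or_gt 1 s with h1 | h1
  · rw [gb1_of_ge_one h1]
    simpa using mul_nonneg (by norm_num) (Real.sqrt_nonneg (gb s))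
  · rw [gb1_of_mem h.le h1.le]
    have hs := sq_le_sqrt_gb h.le h1.le
    have hb : |(-60:ℝ) * s^2 * (1-s)^3| ≤ 60 * (1-s)^2 := by
      rw [abs_le]
      constructor <;> nlinarith [sq_nonneg s, sq_nonneg (1-s), sq_nonneg (s*(1-s)),
        mul_pos h (sub_pos.2 h1), sq_nonneg (s-1), pow_nonneg (sub_nonneg.2 h1.le) 3]
    calc |(-60:ℝ) * s^2 * (1-s)^3| ≤ 60 * (1-s)^2 := hb
      _ ≤ 180 * Real.sqrt (gb s) := by nlinarith [Real.sqrt_nonneg (gb s)]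

lemma abs_gb2_le (s : ℝ) : |gb2 s| ≤ 180 * Real.sqrt (gb s) := by
  rcases le_or_gt s 0 with h | h
  · rw [gb2_of_nonpos h, gb_of_nonpos h]
    simp [Real.sqrt_one]
  rcases le_or_gt 1 s with h1 | h1
  · rw [gb2_of_ge_one h1]
    simpa using mul_nonneg (by norm_num : (0:ℝ) ≤ 180) (Real.sqrt_nonneg (gb s))
  · rw [gb2_of_mem h.le h1.le]
    have hs := sq_le_sqrt_gb h.le h1.le
    have hb : |60 * s * (1-s)^2 * (5*s - 2)| ≤ 180 * (1-s)^2 := by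
      rw [abs_le]
      constructor <;> nlinarith [sq_nonneg (1-s), mul_pos h (sub_pos.2 h1),
        sq_nonneg (s*(1-s)), sq_nonneg ((1-s)*(5*s-2))]
    calc |60 * s * (1-s)^2 * (5*s - 2)| ≤ 180 * (1-s)^2 := hb
      _ ≤ 180 * Real.sqrt (gb s) := by nlinarith [Real.sqrt_nonneg (gb s)]

section PartB

open RealInnerProductSpace

variable {d : ℕ}

local notation "E" => EuclideanSpace ℝ (Fin d)

lemma hasFDerivAt_u (a N : ℝ) (y : E) :
    HasFDerivAt (fun z : E => a * (‖z‖^2 - N^2)) (a • ((2:ℕ) • innerSL ℝ y)) y :=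
  (((hasStrictFDerivAt_norm_sq y).hasFDerivAt).sub_const (N^2)).const_mul a

lemma hasFDerivAt_phi (a N : ℝ) (y : E) :
    HasFDerivAt (fun z : E => gb (a * (‖z‖^2 - N^2)))
      (gb1 (a * (‖y‖^2 - N^2)) • (a • ((2:ℕ) • innerSL ℝ y))) y :=
  (hasDerivAt_gb (a * (‖y‖^2 - N^2))).comp_hasFDerivAt (f := fun z : E => a * (‖z‖^2 - N^2)) y (hasFDerivAt_u a N y)

lemma contDiff_phi (a N : ℝ) : ContDiff ℝ 2 (fun z : E => gb (a * (‖z‖^2 - N^2))) := by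
  apply contDiff_gb.comp
  exact contDiff_const.mul ((contDiff_norm_sq (𝕜 := ℝ)).sub contDiff_const)

lemma fderiv_phi_apply (a N : ℝ) (y : E) (i : Fin d) :
    fderiv ℝ (fun z : E => gb (a * (‖z‖^2 - N^2))) y (EuclideanSpace.single i 1)
      = (2 * a * gb1 (a * (‖y‖^2 - N^2))) * (y i) := by
  rw [(hasFDerivAt_phi a N y).fderiv]
  simp only [ContinuousLinearMap.coe_smul', Pi.smul_apply, innerSL_apply_apply, smul_eq_mul,
    ContinuousLinearMap.smul_apply, nsmul_eq_mul, Nat.cast_ofNat]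
  have h2 : (inner ℝ y (EuclideanSpace.single i (1:ℝ)) : ℝ) = y i := by
    rw [EuclideanSpace.inner_single_right]; simp
  rw [h2]
  ring

lemma key_eval (a N : ℝ) (x : E) (i : Fin d) :
    iteratedFDeriv ℝ 2 (fun y : E => gb (a * (‖y‖^2 - N^2))) x
      ![EuclideanSpace.single i 1, EuclideanSpace.single i 1]
      = 2*a*gb1 (a * (‖x‖^2 - N^2)) + 4*a^2 * gb2 (a * (‖x‖^2 - N^2)) * (x i)^2 := by
  set φ := fun y : E => gb (a * (‖y‖^2 - N^2)) with hφdef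
  set e : E := EuclideanSpace.single i 1 with hedef
  rw [iteratedFDeriv_two_apply]
  have hm0 : (![e, e] : Fin 2 → E) 0 = e := rfl
  have hm1 : (![e, e] : Fin 2 → E) 1 = e := rfl
  rw [hm0, hm1]
  -- differentiability of the derivative
  have hΦd : DifferentiableAt ℝ (fderiv ℝ φ) x := by
    have h1 : ContDiff ℝ 1 (fderiv ℝ φ) := by
      apply (contDiff_phi a N).fderiv_right
      norm_num
    exact (h1.differentiable (by norm_num)).differentiableAt
  -- step 2 : exchange application and fderiv
  have happ' : HasFDerivAt (fun y : E => fderiv ℝ φ y e)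
      (((ContinuousLinearMap.apply ℝ ℝ) e).comp (fderiv ℝ (fderiv ℝ φ) x)) x :=
    (ContinuousLinearMap.apply ℝ ℝ e).hasFDerivAt.comp x hΦd.hasFDerivAt
  have step2 : fderiv ℝ (fun y : E => fderiv ℝ φ y e) x e = fderiv ℝ (fderiv ℝ φ) x e e := by
    rw [happ'.fderiv]; rfl
  rw [← step2]
  -- rewrite to scalar form
  have hfun : (fun y : E => fderiv ℝ φ y e) =
      fun y : E => (2 * a * gb1 (a * (‖y‖^2 - N^2))) * (y i) :=
    funext fun y => fderiv_phi_apply a N y i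
  rw [hfun]
  -- differentiate the product
  have hc : HasFDerivAt (fun y : E => 2 * a * gb1 (a * (‖y‖^2 - N^2)))
      ((2 * a * gb2 (a * (‖x‖^2 - N^2))) • (a • ((2:ℕ) • innerSL ℝ x))) x :=
    (HasDerivAt.const_mul (2*a) (hasDerivAt_gb1 (a * (‖x‖^2 - N^2)))).comp_hasFDerivAt
      (f := fun z : E => a * (‖z‖^2 - N^2)) x (hasFDerivAt_u a N x)
  have hproj : HasFDerivAt (fun y : E => y i) (EuclideanSpace.proj (𝕜 := ℝ) i) x :=
    (EuclideanSpace.proj (𝕜 := ℝ) i).hasFDerivAt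
  have hmul : HasFDerivAt (fun y : E => 2 * a * gb1 (a * (‖y‖^2 - N^2)) * y i) _ x :=
    hc.mul hproj
  rw [hmul.fderiv]
  simp only [ContinuousLinearMap.add_apply, ContinuousLinearMap.coe_smul', Pi.smul_apply,
    ContinuousLinearMap.smul_apply, innerSL_apply_apply, smul_eq_mul]
  have h1 : EuclideanSpace.proj (𝕜 := ℝ) i e = 1 := by
    rw [hedef]; simp [EuclideanSpace.single_apply]
  have h2 : (inner ℝ x e : ℝ) = x i := by
    rw [hedef, EuclideanSpace.inner_single_right]; simp
  rw [h1, h2]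
  simp only [nsmul_eq_mul, Nat.cast_ofNat]
  ring



lemma norm_sq_eq_sum {d : ℕ} (x : EuclideanSpace ℝ (Fin d)) : ‖x‖^2 = ∑ i, (x i)^2 := by
  rw [EuclideanSpace.norm_eq, Real.sq_sqrt (by positivity)]
  simp [sq_abs]

end PartB

end StmtAux

theorem stmt0 (d : ℕ) (hd : 1 ≤ d) :
    ∃ κ : ℝ, 0 < κ ∧ ∀ N : ℝ, 1 ≤ N →
      ∃ φ : EuclideanSpace ℝ (Fin d) → ℝ, ContDiff ℝ 2 φ ∧
        (∀ x, Set.indicator (Metric.ball (0 : EuclideanSpace ℝ (Fin d)) N)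
            (fun _ => (1 : ℝ)) x ≤ φ x) ∧
        (∀ x, φ x ≤ Set.indicator (Metric.ball (0 : EuclideanSpace ℝ (Fin d)) (N + 1))
            (fun _ => (1 : ℝ)) x) ∧
        (∀ x, |laplacian d φ x| ≤ κ * Real.sqrt (φ x)) := by
  refine ⟨360 * d + 720, by positivity, fun N hN => ?_⟩
  set a : ℝ := 1 / (2 * N + 1) with hadef
  have hNpos : (0:ℝ) < N := by linarith
  have h2N1 : (0:ℝ) < 2 * N + 1 := by linarith
  have ha : 0 < a := by rw [hadef]; positivity
  have ha1 : a ≤ 1 := by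
    rw [hadef, div_le_one h2N1]; linarith
  have haN1 : a * (N + 1) ≤ 1 := by
    rw [hadef, div_mul_eq_mul_div, one_mul, div_le_one h2N1]; linarith
  refine ⟨fun y => gb (a * (‖y‖^2 - N^2)), contDiff_phi a N, ?_, ?_, ?_⟩
  · -- lower bound
    intro x
    rcases le_or_gt N ‖x‖ with hx | hx
    · rw [Set.indicator_of_notMem (by simp [mem_ball_zero_iff]; linarith)]
      exact gb_nonneg _
    · rw [Set.indicator_of_mem (by simp [mem_ball_zero_iff, hx])]
      have hx2 : ‖x‖^2 ≤ N^2 := by nlinarith [norm_nonneg x]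
      show (1:ℝ) ≤ gb (a * (‖x‖^2 - N^2))
      rw [gb_of_nonpos (mul_nonpos_of_nonneg_of_nonpos ha.le (by linarith))]
  · -- upper bound
    intro x
    rcases lt_or_ge ‖x‖ (N+1) with hx | hx
    · rw [Set.indicator_of_mem (by simp [mem_ball_zero_iff, hx])]
      exact gb_le_one _
    · rw [Set.indicator_of_notMem (by simp [mem_ball_zero_iff]; linarith)]
      have hx2 : (N+1)^2 ≤ ‖x‖^2 := by nlinarith [norm_nonneg x]
      have harg : 1 ≤ a * (‖x‖^2 - N^2) := by
        have : (2*N+1) ≤ ‖x‖^2 - N^2 := by nlinarith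
        calc (1:ℝ) = a * (2*N+1) := by rw [hadef]; field_simp
          _ ≤ a * (‖x‖^2 - N^2) := by
            exact mul_le_mul_of_nonneg_left this ha.le
      show gb (a * (‖x‖^2 - N^2)) ≤ 0
      rw [gb_of_ge_one harg]
  · -- Laplacian bound
    intro x
    show |laplacian d (fun y => gb (a * (‖y‖^2 - N^2))) x|
      ≤ (360 * (d:ℝ) + 720) * Real.sqrt (gb (a * (‖x‖^2 - N^2)))
    set u : ℝ := a * (‖x‖^2 - N^2) with hudef
    set S : ℝ := Real.sqrt (gb u) with hSdef
    have hS : 0 ≤ S := Real.sqrt_nonneg _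
    have hlap : laplacian d (fun y => gb (a * (‖y‖^2 - N^2))) x
        = (d:ℝ) * (2*a*gb1 u) + 4*a^2*gb2 u * ‖x‖^2 := by
      unfold laplacian
      calc ∑ i : Fin d, iteratedFDeriv ℝ 2 (fun y => gb (a * (‖y‖^2 - N^2))) x
            ![EuclideanSpace.single i 1, EuclideanSpace.single i 1]
          = ∑ i : Fin d, (2*a*gb1 u + 4*a^2 * gb2 u * (x i)^2) :=
            Finset.sum_congr rfl (fun i _ => key_eval a N x i)
        _ = (d:ℝ) * (2*a*gb1 u) + 4*a^2*gb2 u * (∑ i, (x i)^2) := by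
            rw [Finset.sum_add_distrib, Finset.sum_const, ← Finset.mul_sum]
            simp [Finset.card_univ]
            try ring
        _ = (d:ℝ) * (2*a*gb1 u) + 4*a^2*gb2 u * ‖x‖^2 := by rw [norm_sq_eq_sum]
    rw [hlap]
    have hg1 := abs_gb1_le u
    have hg2 := abs_gb2_le u
    rw [← hSdef] at hg1 hg2
    rcases le_or_gt (‖x‖^2) ((N+1)^2) with hx2 | hx2
    · -- inside: use the coefficient bounds
      have hkey : a^2 * ‖x‖^2 ≤ 1 := by
        have h1 : a^2 * ‖x‖^2 ≤ a^2 * (N+1)^2 :=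
          mul_le_mul_of_nonneg_left hx2 (sq_nonneg a)
        have h2 : a^2 * (N+1)^2 = (a*(N+1))^2 := by ring
        have h3 : (a*(N+1))^2 ≤ 1 := by nlinarith [mul_nonneg ha.le (by linarith : (0:ℝ) ≤ N+1)]
        linarith
      have hd0 : (0:ℝ) ≤ (d:ℝ) := Nat.cast_nonneg d
      have t1 : |(d:ℝ) * (2*a*gb1 u)| ≤ 360 * (d:ℝ) * S := by
        have habseq : |(d:ℝ) * (2*a*gb1 u)| = (d:ℝ) * (2 * a * |gb1 u|) := by
          rw [abs_mul, abs_mul, abs_of_nonneg hd0,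
            abs_of_nonneg (mul_nonneg (by norm_num : (0:ℝ) ≤ 2) ha.le)]
          try ring
        rw [habseq]
        calc (d:ℝ) * (2 * a * |gb1 u|) ≤ (d:ℝ) * (2 * a * (180 * S)) := by
              apply mul_le_mul_of_nonneg_left _ hd0
              apply mul_le_mul_of_nonneg_left hg1
              positivity
          _ = 360 * (d:ℝ) * S * a := by ring
          _ ≤ 360 * (d:ℝ) * S * 1 := by
              apply mul_le_mul_of_nonneg_left ha1
              positivity
          _ = 360 * (d:ℝ) * S := by ring
      have t2 : |4*a^2*gb2 u * ‖x‖^2| ≤ 720 * S := by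
        have : |4*a^2*gb2 u * ‖x‖^2| = 4 * |gb2 u| * (a^2 * ‖x‖^2) := by
          rw [abs_mul, abs_mul,
            abs_of_nonneg (mul_nonneg (by norm_num : (0:ℝ) ≤ 4) (sq_nonneg a)),
            abs_of_nonneg (sq_nonneg ‖x‖)]
          try ring
        rw [this]
        calc 4 * |gb2 u| * (a^2 * ‖x‖^2) ≤ 4 * |gb2 u| * 1 := by
              apply mul_le_mul_of_nonneg_left hkey
              positivity
          _ = 4 * |gb2 u| := by ring
          _ ≤ 4 * (180 * S) := by linarith [abs_nonneg (gb2 u)]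
          _ = 720 * S := by ring
      calc |(d:ℝ) * (2*a*gb1 u) + 4*a^2*gb2 u * ‖x‖^2|
          ≤ |(d:ℝ) * (2*a*gb1 u)| + |4*a^2*gb2 u * ‖x‖^2| := abs_add_le _ _
        _ ≤ 360 * (d:ℝ) * S + 720 * S := by linarith
        _ = (360 * (d:ℝ) + 720) * S := by ring
        _ ≤ (360 * (d:ℝ) + 720) * S := le_rfl
    · -- outside: the derivative terms vanish
      have harg : 1 ≤ u := by
        have : (2*N+1) ≤ ‖x‖^2 - N^2 := by nlinarith
        calc (1:ℝ) = a * (2*N+1) := by rw [hadef]; field_simp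
          _ ≤ u := by rw [hudef]; exact mul_le_mul_of_nonneg_left this ha.le
      rw [gb1_of_ge_one harg, gb2_of_ge_one harg]
      simp only [mul_zero, zero_mul, add_zero, abs_zero]
      positivity
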